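/- Let n ≥ 3 and let c = (c_1,…,c_n) be a normalized admissible sequence (2 ≤ c_j ≤ c_{j+1}+1 for j < n, c_n ≤ c_1+1, and either all c_j are equal or c_1 is minimal with c_n = c_1 + 1). Define c′_j = c_j − ⌊(c_j + j − 1)/n⌋ for 1 ≤ j ≤ n−1. If c′_j ≤ 2n − 3 for all 1 ≤ j ≤ n−1, then c_j ≤ 2n − 1 for all 1 ≤ j ≤ n. -/
import Mathlib


/-- Key arithmetic fact: if cj - q ≤ 2n-3 where nq ≤ cj + j - 1, j ≤ n-1, then cj ≤ 2n-1. -/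
lemma key_arith (n j cj q : ℕ) (hn : 3 ≤ n) (hj1 : 1 ≤ j) (hj : j ≤ n - 1)
    (hq : n * q ≤ cj + j - 1) (hb : cj - q ≤ 2 * n - 3) : cj ≤ 2 * n - 1 := by
  by_contra h
  push_neg at h
  have h1 : 2 * n ≤ cj := by omega
  have h2 : cj ≤ 2 * n - 3 + q := by omega
  have h2' : cj + 3 ≤ 2 * n + q := by omega
  have h3 : n * q + 1 ≤ cj + j := by omega
  have h4 : j ≤ n - 1 := hj
  have h5 : j + 1 ≤ n := by omega
  nlinarith [Nat.mul_le_mul_left n h2', h3, h1, h5]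

/-- Stronger version for j = 1: cj ≤ 2n-2. -/
lemma key_arith1 (n cj q : ℕ) (hn : 3 ≤ n) (hq : n * q ≤ cj)
    (hb : cj - q ≤ 2 * n - 3) : cj ≤ 2 * n - 2 := by
  by_contra h
  push_neg at h
  have h1 : 2 * n - 1 ≤ cj := by omega
  have h1' : 2 * n ≤ cj + 1 := by omega
  have h2' : cj + 3 ≤ 2 * n + q := by omega
  nlinarith [Nat.mul_le_mul_left n h2', hq, h1']

/-- induction step of Gustafson's Loewy length bound. -/
theorem loewy_length_bound_step (n : ℕ) (hn : 3 ≤ n) (c c' : ℕ → ℕ)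
    (hadm1 : ∀ j, 1 ≤ j → j ≤ n - 1 → 2 ≤ c j ∧ c j ≤ c (j + 1) + 1)
    (hadm2 : c n ≤ c 1 + 1)
    (hnorm : (∀ i j, 1 ≤ i → i ≤ n → 1 ≤ j → j ≤ n → c i = c j) ∨
      ((∀ j, 1 ≤ j → j ≤ n → c 1 ≤ c j) ∧ c n = c 1 + 1))
    (hc' : ∀ j, 1 ≤ j → j ≤ n - 1 → c' j = c j - (c j + j - 1) / n)
    (hbound : ∀ j, 1 ≤ j → j ≤ n - 1 → c' j ≤ 2 * n - 3) :
    ∀ j, 1 ≤ j → j ≤ n → c j ≤ 2 * n - 1 := by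
  have hsmall : ∀ j, 1 ≤ j → j ≤ n - 1 → c j ≤ 2 * n - 1 := by
    intro j hj1 hj
    have hb := hbound j hj1 hj
    rw [hc' j hj1 hj] at hb
    exact key_arith n j (c j) ((c j + j - 1) / n) hn hj1 hj
      (Nat.mul_div_le (c j + j - 1) n) hb
  intro j hj1 hj
  rcases Nat.lt_or_ge j n with hlt | hge
  · exact hsmall j hj1 (by omega)
  · have hjn : j = n := by omega
    rw [hjn]
    have h1le : (1:ℕ) ≤ n - 1 := by omega
    rcases hnorm with heq | ⟨_, hsucc⟩
    · have := heq n 1 (by omega) le_rfl le_rfl (by omega)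
      have := hsmall 1 le_rfl h1le
      omega
    · -- c n = c 1 + 1; show c 1 ≤ 2n - 2
      have hb := hbound 1 le_rfl h1le
      rw [hc' 1 le_rfl h1le] at hb
      have hq : n * ((c 1 + 1 - 1) / n) ≤ c 1 := by
        simp only [Nat.add_sub_cancel]
        exact Nat.mul_div_le (c 1) n
      have := key_arith1 n (c 1) ((c 1 + 1 - 1) / n) hn hq hb
      omega
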